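/- Let ν₁, ν₂, β₁, β₂ > 1 and C > 0. Let V be a bounded positive operator on the Hilbert space ℓ²(ℤ × ℕ, ℂ) (positive meaning self-adjoint with ⟨V x, x⟩ ≥ 0 for all x), whose matrix entries v((n,j),(m,k)) := ⟨δ_{(n,j)}, V δ_{(m,k)}⟩ satisfy |v((n,j),(m,k))| ≤ C·(1+j²)^{−β₁/2}·(1+k²)^{−β₂/2}·(1+n²)^{−ν₁/2}·(1+m²)^{−ν₂/2} for all n, m ∈ ℤ and j, k ∈ ℕ. Set ν₀ := min(ν₁, ν₂) and β₀ := min(β₁, β₂). Then there exists a bounded positive operator 𝒱 on ℓ²(ℤ × ℕ, ℂ) whose matrix entries are ⟨δ_{(n,j)}, 𝒱 δ_{(m,k)}⟩ = (1+n²)^{ν₀/4}·(1+j²)^{β₀/4}·v((n,j),(m,k))·(1+k²)^{β₀/4}·(1+m²)^{ν₀/4}; consequently V = D ∘ 𝒱 ∘ D, where D is the bounded diagonal operator with D δ_{(n,j)} = (1+n²)^{−ν₀/4}·(1+j²)^{−β₀/4}·δ_{(n,j)}. -/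

import Mathlib

open scoped InnerProductSpace ENNReal
section Aux
variable {ι : Type*} [DecidableEq ι]

lemma sqrt_le_helper {a b : ℝ} (hb : 0 ≤ b) (h : a^2 ≤ b^2) : a ≤ b := by
  nlinarith [abs_nonneg a, sq_abs a, le_abs_self a]

omit [DecidableEq ι] in
lemma lp_summable_sq (x : lp (fun _ : ι => ℂ) 2) : Summable fun a => ‖x a‖ ^ 2 := by
  have := (memℓp_gen_iff (p := 2) (by norm_num)).1 (lp.memℓp x)
  norm_num at this
  exact this

omit [DecidableEq ι] in
lemma memℓp_two_of_sq {f : ι → ℂ} (hf : Summable fun a => ‖f a‖ ^ 2) : Memℓp f 2 := by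
  apply memℓp_gen
  convert hf using 2 with a
  norm_num

omit [DecidableEq ι] in
lemma lp_norm_sq (f : lp (fun _ : ι => ℂ) 2) : ‖f‖ ^ 2 = ∑' a, ‖f a‖ ^ 2 := by
  have h := lp.norm_rpow_eq_tsum (p := 2) (by norm_num) f
  norm_num at h
  exact h

lemma lp_single_apply (a b : ι) (z : ℂ) :
    (lp.single 2 a z : lp (fun _ : ι => ℂ) 2) b = if b = a then z else 0 := by
  rw [lp.single_apply]
  split_ifs with h
  · subst h; exact Pi.single_eq_same _ _
  · exact Pi.single_eq_of_ne h _

lemma inner_single_one (a : ι) (f : lp (fun _ : ι => ℂ) 2) :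
    ⟪lp.single 2 a (1 : ℂ), f⟫_ℂ = f a := by
  rw [lp.inner_single_left]; simp [RCLike.inner_apply]

lemma exists_kernel_op (K : ι → ι → ℂ) (hK : Summable fun p : ι × ι => ‖K p.1 p.2‖ ^ 2) :
    ∃ T : lp (fun _ : ι => ℂ) 2 →L[ℂ] lp (fun _ : ι => ℂ) 2,
      ∀ (x : lp (fun _ : ι => ℂ) 2) (a : ι), T x a = ∑' b, K a b * x b := by
  have hrow : ∀ a, Summable fun b => ‖K a b‖ ^ 2 := fun a => hK.prod_factor a
  have hmemrow : ∀ a, Memℓp (fun b => (starRingEnd ℂ) (K a b)) 2 := by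
    intro a
    apply memℓp_two_of_sq
    simpa using hrow a
  set r : ι → lp (fun _ : ι => ℂ) 2 := fun a => ⟨fun b => (starRingEnd ℂ) (K a b), hmemrow a⟩
    with hr
  have hrnorm : ∀ a, ‖r a‖ ^ 2 = ∑' b, ‖K a b‖ ^ 2 := by
    intro a
    rw [lp_norm_sq]
    congr 1; funext b
    simp [hr]
  have hN : Summable fun a => ‖r a‖ ^ 2 := by
    simp_rw [hrnorm]
    exact ((summable_prod_of_nonneg (fun p => sq_nonneg _)).mp hK).2
  have hinner : ∀ (x : lp (fun _ : ι => ℂ) 2) (a : ι), ⟪r a, x⟫_ℂ = ∑' b, K a b * x b := by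
    intro x a
    rw [lp.inner_eq_tsum]
    congr 1; funext b
    simp [hr, RCLike.inner_apply]
    ring
  have hb : ∀ (x : lp (fun _ : ι => ℂ) 2) (a : ι), ‖⟪r a, x⟫_ℂ‖ ^ 2 ≤ ‖r a‖ ^ 2 * ‖x‖ ^ 2 := by
    intro x a
    rw [← mul_pow]
    exact pow_le_pow_left₀ (norm_nonneg _) (norm_inner_le_norm _ _) 2
  have hmem : ∀ x : lp (fun _ : ι => ℂ) 2, Memℓp (fun a => ⟪r a, x⟫_ℂ) 2 := by
    intro x
    apply memℓp_two_of_sq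
    exact Summable.of_nonneg_of_le (fun a => sq_nonneg _) (fun a => hb x a)
      (hN.mul_right (‖x‖ ^ 2))
  let Tl : lp (fun _ : ι => ℂ) 2 →ₗ[ℂ] lp (fun _ : ι => ℂ) 2 :=
    { toFun := fun x => ⟨fun a => ⟪r a, x⟫_ℂ, hmem x⟩
      map_add' := fun x y => by
        apply lp.ext; funext a
        rw [lp.coeFn_add]
        exact inner_add_right _ _ _
      map_smul' := fun c x => by
        apply lp.ext; funext a
        rw [lp.coeFn_smul]
        exact inner_smul_right _ _ _ }
  have hbound : ∀ x, ‖Tl x‖ ≤ Real.sqrt (∑' a, ‖r a‖ ^ 2) * ‖x‖ := by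
    intro x
    have h1 : ‖Tl x‖ ^ 2 ≤ (∑' a, ‖r a‖ ^ 2) * ‖x‖ ^ 2 := by
      rw [lp_norm_sq]
      calc (∑' a, ‖(Tl x) a‖ ^ 2) ≤ ∑' a, ‖r a‖ ^ 2 * ‖x‖ ^ 2 := by
            apply Summable.tsum_le_tsum _ _ (hN.mul_right _)
            · exact fun a => hb x a
            · exact Summable.of_nonneg_of_le (fun a => sq_nonneg _) (fun a => hb x a)
                (hN.mul_right _)
        _ = (∑' a, ‖r a‖ ^ 2) * ‖x‖ ^ 2 := tsum_mul_right
    calc ‖Tl x‖ = Real.sqrt (‖Tl x‖ ^ 2) := (Real.sqrt_sq (norm_nonneg _)).symm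
      _ ≤ Real.sqrt ((∑' a, ‖r a‖ ^ 2) * ‖x‖ ^ 2) := Real.sqrt_le_sqrt h1
      _ = Real.sqrt (∑' a, ‖r a‖ ^ 2) * ‖x‖ := by
          rw [Real.sqrt_mul (tsum_nonneg fun a => sq_nonneg _), Real.sqrt_sq (norm_nonneg _)]
  exact ⟨Tl.mkContinuous _ hbound, fun x a => hinner x a⟩

lemma exists_diag_op (d : ι → ℝ) (hd : ∀ a, |d a| ≤ 1) :
    ∃ D : lp (fun _ : ι => ℂ) 2 →L[ℂ] lp (fun _ : ι => ℂ) 2,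
      ∀ (x : lp (fun _ : ι => ℂ) 2) (a : ι), D x a = (d a : ℂ) * x a := by
  have key : ∀ (x : lp (fun _ : ι => ℂ) 2) (a : ι), ‖(d a : ℂ) * x a‖ ^ 2 ≤ ‖x a‖ ^ 2 := by
    intro x a
    rw [norm_mul]
    have h1 : ‖(d a : ℂ)‖ ≤ 1 := by simpa using hd a
    have h2 := mul_le_of_le_one_left (norm_nonneg (x a)) h1
    exact pow_le_pow_left₀ (by positivity) h2 2
  have hmem : ∀ x : lp (fun _ : ι => ℂ) 2, Memℓp (fun a => (d a : ℂ) * x a) 2 := fun x =>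
    memℓp_two_of_sq (Summable.of_nonneg_of_le (fun a => sq_nonneg _) (key x) (lp_summable_sq x))
  let Dl : lp (fun _ : ι => ℂ) 2 →ₗ[ℂ] lp (fun _ : ι => ℂ) 2 :=
    { toFun := fun x => ⟨fun a => (d a : ℂ) * x a, hmem x⟩
      map_add' := fun x y => by
        apply lp.ext; funext a
        show (d a : ℂ) * (x + y) a = (d a : ℂ) * x a + (d a : ℂ) * y a
        show (d a : ℂ) * (x + y) a = _
        rw [lp.coeFn_add]
        show _ = (d a : ℂ) * x a + (d a : ℂ) * y a
        simp [Pi.add_apply, mul_add]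
      map_smul' := fun c x => by
        apply lp.ext; funext a
        show (d a : ℂ) * (c • x) a = c • ((d a : ℂ) * x a)
        show (d a : ℂ) * (c • x) a = c • ((d a : ℂ) * x a)
        rw [lp.coeFn_smul]
        simp [Pi.smul_apply]
        ring }
  have hbound : ∀ x, ‖Dl x‖ ≤ 1 * ‖x‖ := by
    intro x
    rw [one_mul]
    apply sqrt_le_helper (norm_nonneg _)
    rw [lp_norm_sq, lp_norm_sq]
    exact Summable.tsum_le_tsum (key x) (Summable.of_nonneg_of_le (fun a => sq_nonneg _) (key x)
      (lp_summable_sq x)) (lp_summable_sq x)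
  exact ⟨Dl.mkContinuous 1 hbound, fun x a => rfl⟩

lemma single_eq_smul_one (a : ι) (z : ℂ) :
    (lp.single 2 a z : lp (fun _ : ι => ℂ) 2) = z • lp.single 2 a 1 := by
  apply lp.ext; funext b
  rw [lp.coeFn_smul]
  simp only [Pi.smul_apply, smul_eq_mul]
  rw [lp_single_apply, lp_single_apply]
  split_ifs with h
  · simp
  · ring

lemma dense_FS : Dense {g : lp (fun _ : ι => ℂ) 2 |
    ∃ (s : Finset ι) (c : ι → ℂ), g = ∑ a ∈ s, c a • lp.single 2 a 1} := by
  intro f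
  have h := lp.hasSum_single (E := fun _ : ι => ℂ) ENNReal.ofNat_ne_top f
  apply mem_closure_of_tendsto h
  filter_upwards with s
  exact ⟨s, fun a => f a, Finset.sum_congr rfl fun a _ => single_eq_smul_one a (f a)⟩

set_option synthInstance.maxHeartbeats 1000000 in
lemma clm_ext_of_singles {A B : lp (fun _ : ι => ℂ) 2 →L[ℂ] lp (fun _ : ι => ℂ) 2}
    (h : ∀ a : ι, A (lp.single 2 a 1) = B (lp.single 2 a 1)) : A = B := by
  have hfun : ⇑A = ⇑B := by
    apply Continuous.ext_on dense_FS A.continuous B.continuous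
    rintro g ⟨s, c, rfl⟩
    simp only [map_sum, map_smul, h]
  exact ContinuousLinearMap.ext fun x => congrFun hfun x

lemma summable_nat_aux {p : ℝ} (hp : p < -(1/2)) :
    Summable fun j : ℕ => (1 + (j : ℝ) ^ 2) ^ p := by
  rw [← summable_nat_add_iff 1]
  have h2p : 2 * p < -1 := by linarith
  have hs : Summable fun j : ℕ => ((j : ℝ) + 1) ^ (2 * p) := by
    have := Real.summable_nat_rpow.2 h2p
    have := (summable_nat_add_iff 1).2 this
    convert this using 2 with j
    rfl
    push_cast
    ring_nf
  apply Summable.of_nonneg_of_le (fun j => Real.rpow_nonneg (by positivity) p) _ hs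
  intro j
  have hbase : ((j : ℝ) + 1) ^ (2 * p) = (((j : ℝ) + 1) ^ 2) ^ p := by
    rw [← Real.rpow_natCast ((j : ℝ) + 1) 2, ← Real.rpow_mul (by positivity)]
    norm_num
  rw [hbase]
  apply Real.rpow_le_rpow_of_nonpos (by positivity) _ (by linarith)
  push_cast
  nlinarith [sq_nonneg ((j : ℝ))]

lemma summable_int_aux {p : ℝ} (hp : p < -(1/2)) :
    Summable fun n : ℤ => (1 + (n : ℝ) ^ 2) ^ p := by
  apply Summable.of_nat_of_neg_add_one
  · convert summable_nat_aux hp using 3 with n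
    all_goals (push_cast; try ring)
  · have := (summable_nat_add_iff 1).2 (summable_nat_aux hp)
    convert this using 3 with n
    rfl
    all_goals (push_cast; try ring)

end Aux

set_option maxHeartbeats 1000000 in
theorem stmt_6 (ν₁ ν₂ β₁ β₂ C : ℝ) (hν₁ : 1 < ν₁) (hν₂ : 1 < ν₂) (hβ₁ : 1 < β₁) (hβ₂ : 1 < β₂)
    (hC : 0 < C)
    (V : lp (fun _ : ℤ × ℕ => ℂ) 2 →L[ℂ] lp (fun _ : ℤ × ℕ => ℂ) 2)
    (hVsa : IsSelfAdjoint V)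
    (hVpos : ∀ x : lp (fun _ : ℤ × ℕ => ℂ) 2, 0 ≤ (⟪V x, x⟫_ℂ).re)
    (hVbound : ∀ (n m : ℤ) (j k : ℕ),
      ‖⟪lp.single 2 ((n, j) : ℤ × ℕ) (1 : ℂ), V (lp.single 2 ((m, k) : ℤ × ℕ) (1 : ℂ))⟫_ℂ‖ ≤
        C * (1 + (j : ℝ) ^ 2) ^ (-(β₁ / 2)) * (1 + (k : ℝ) ^ 2) ^ (-(β₂ / 2)) *
          (1 + (n : ℝ) ^ 2) ^ (-(ν₁ / 2)) * (1 + (m : ℝ) ^ 2) ^ (-(ν₂ / 2))) :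
    ∃ 𝒱 : lp (fun _ : ℤ × ℕ => ℂ) 2 →L[ℂ] lp (fun _ : ℤ × ℕ => ℂ) 2,
      IsSelfAdjoint 𝒱 ∧
      (∀ x : lp (fun _ : ℤ × ℕ => ℂ) 2, 0 ≤ (⟪𝒱 x, x⟫_ℂ).re) ∧
      (∀ (n m : ℤ) (j k : ℕ),
        ⟪lp.single 2 ((n, j) : ℤ × ℕ) (1 : ℂ), 𝒱 (lp.single 2 ((m, k) : ℤ × ℕ) (1 : ℂ))⟫_ℂ =
          (((1 + (n : ℝ) ^ 2) ^ (min ν₁ ν₂ / 4) * (1 + (j : ℝ) ^ 2) ^ (min β₁ β₂ / 4) : ℝ) : ℂ) *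
            ⟪lp.single 2 ((n, j) : ℤ × ℕ) (1 : ℂ), V (lp.single 2 ((m, k) : ℤ × ℕ) (1 : ℂ))⟫_ℂ *
          (((1 + (k : ℝ) ^ 2) ^ (min β₁ β₂ / 4) * (1 + (m : ℝ) ^ 2) ^ (min ν₁ ν₂ / 4) : ℝ) : ℂ)) ∧
      ∀ D : lp (fun _ : ℤ × ℕ => ℂ) 2 →L[ℂ] lp (fun _ : ℤ × ℕ => ℂ) 2,
        (∀ (n : ℤ) (j : ℕ),
          D (lp.single 2 ((n, j) : ℤ × ℕ) (1 : ℂ)) =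
            (((1 + (n : ℝ) ^ 2) ^ (-(min ν₁ ν₂ / 4)) * (1 + (j : ℝ) ^ 2) ^ (-(min β₁ β₂ / 4)) :
                ℝ) : ℂ) • lp.single 2 ((n, j) : ℤ × ℕ) (1 : ℂ)) →
        V = D ∘L 𝒱 ∘L D := by
  classical
  have hν₀1 : 1 < min ν₁ ν₂ := lt_min hν₁ hν₂
  have hβ₀1 : 1 < min β₁ β₂ := lt_min hβ₁ hβ₂
  -- weights
  set w : ℤ × ℕ → ℝ := fun a =>
    (1 + (a.1 : ℝ) ^ 2) ^ (min ν₁ ν₂ / 4) * (1 + (a.2 : ℝ) ^ 2) ^ (min β₁ β₂ / 4) with hwdef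
  have hb1 : ∀ n : ℤ, (0:ℝ) < 1 + (n : ℝ) ^ 2 := fun n => by positivity
  have hb2 : ∀ j : ℕ, (0:ℝ) < 1 + (j : ℝ) ^ 2 := fun j => by positivity
  have hwpos : ∀ a, 0 < w a := fun a => by
    simp only [hwdef]; positivity
  have hw1 : ∀ a, 1 ≤ w a := fun a => by
    simp only [hwdef]
    have h1 : (1:ℝ) ≤ (1 + (a.1 : ℝ) ^ 2) ^ (min ν₁ ν₂ / 4) :=
      Real.one_le_rpow (by nlinarith [sq_nonneg ((a.1 : ℝ))]) (by linarith)
    have h2 : (1:ℝ) ≤ (1 + (a.2 : ℝ) ^ 2) ^ (min β₁ β₂ / 4) :=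
      Real.one_le_rpow (by nlinarith [sq_nonneg ((a.2 : ℝ))]) (by linarith)
    nlinarith
  set v : ℤ × ℕ → ℤ × ℕ → ℂ :=
    fun a b => ⟪lp.single 2 a (1:ℂ), V (lp.single 2 b (1:ℂ))⟫_ℂ with hvdef
  set K : ℤ × ℕ → ℤ × ℕ → ℂ := fun a b => ((w a : ℝ) : ℂ) * v a b * ((w b : ℝ) : ℂ) with hKdef
  -- the decay profiles
  set f : ℤ × ℕ → ℝ := fun a =>
    (1 + (a.1 : ℝ) ^ 2) ^ (min ν₁ ν₂ / 4 - ν₁ / 2) *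
      (1 + (a.2 : ℝ) ^ 2) ^ (min β₁ β₂ / 4 - β₁ / 2) with hfdef
  set g : ℤ × ℕ → ℝ := fun a =>
    (1 + (a.1 : ℝ) ^ 2) ^ (min ν₁ ν₂ / 4 - ν₂ / 2) *
      (1 + (a.2 : ℝ) ^ 2) ^ (min β₁ β₂ / 4 - β₂ / 2) with hgdef
  -- pointwise bound on the kernel
  have hKb : ∀ a b : ℤ × ℕ, ‖K a b‖ ≤ C * f a * g b := by
    intro a b
    have hnorm : ‖K a b‖ = w a * ‖v a b‖ * w b := by
      simp only [hKdef, norm_mul, Complex.norm_real, Real.norm_eq_abs,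
        abs_of_pos (hwpos a), abs_of_pos (hwpos b)]
    rw [hnorm]
    have hvb' : ‖v a b‖ ≤ C * (1 + (a.2 : ℝ) ^ 2) ^ (-(β₁ / 2)) * (1 + (b.2 : ℝ) ^ 2) ^ (-(β₂ / 2))
        * (1 + (a.1 : ℝ) ^ 2) ^ (-(ν₁ / 2)) * (1 + (b.1 : ℝ) ^ 2) ^ (-(ν₂ / 2)) :=
      hVbound a.1 b.1 a.2 b.2
    have key : w a * (C * (1 + (a.2 : ℝ) ^ 2) ^ (-(β₁ / 2)) * (1 + (b.2 : ℝ) ^ 2) ^ (-(β₂ / 2))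
        * (1 + (a.1 : ℝ) ^ 2) ^ (-(ν₁ / 2)) * (1 + (b.1 : ℝ) ^ 2) ^ (-(ν₂ / 2))) * w b
        = C * f a * g b := by
      simp only [hwdef, hfdef, hgdef]
      rw [show min ν₁ ν₂ / 4 - ν₁ / 2 = min ν₁ ν₂ / 4 + -(ν₁ / 2) by ring,
        show min β₁ β₂ / 4 - β₁ / 2 = min β₁ β₂ / 4 + -(β₁ / 2) by ring,
        show min ν₁ ν₂ / 4 - ν₂ / 2 = min ν₁ ν₂ / 4 + -(ν₂ / 2) by ring,
        show min β₁ β₂ / 4 - β₂ / 2 = min β₁ β₂ / 4 + -(β₂ / 2) by ring,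
        Real.rpow_add (hb1 a.1), Real.rpow_add (hb2 a.2),
        Real.rpow_add (hb1 b.1), Real.rpow_add (hb2 b.2)]
      ring
    rw [← key]
    exact mul_le_mul_of_nonneg_right
      (mul_le_mul_of_nonneg_left hvb' (hwpos a).le) (hwpos b).le
  -- summability of the squares of the profiles
  have hf2 : Summable fun a : ℤ × ℕ => f a ^ 2 := by
    have h1 : Summable fun n : ℤ => (1 + (n : ℝ) ^ 2) ^ (2 * (min ν₁ ν₂ / 4 - ν₁ / 2)) := by
      apply summable_int_aux
      have := min_le_left ν₁ ν₂
      linarith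
    have h2 : Summable fun j : ℕ => (1 + (j : ℝ) ^ 2) ^ (2 * (min β₁ β₂ / 4 - β₁ / 2)) := by
      apply summable_nat_aux
      have := min_le_left β₁ β₂
      linarith
    have := h1.mul_of_nonneg h2 (fun n => Real.rpow_nonneg (hb1 n).le _)
      (fun j => Real.rpow_nonneg (hb2 j).le _)
    apply this.congr
    intro a
    simp only [hfdef]
    rw [mul_pow, ← Real.rpow_natCast ((1 + (a.1:ℝ)^2) ^ _) 2,
      ← Real.rpow_natCast ((1 + (a.2:ℝ)^2) ^ _) 2,
      ← Real.rpow_mul (hb1 a.1).le, ← Real.rpow_mul (hb2 a.2).le]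
    push_cast
    ring_nf
  have hg2 : Summable fun a : ℤ × ℕ => g a ^ 2 := by
    have h1 : Summable fun n : ℤ => (1 + (n : ℝ) ^ 2) ^ (2 * (min ν₁ ν₂ / 4 - ν₂ / 2)) := by
      apply summable_int_aux
      have := min_le_right ν₁ ν₂
      linarith
    have h2 : Summable fun j : ℕ => (1 + (j : ℝ) ^ 2) ^ (2 * (min β₁ β₂ / 4 - β₂ / 2)) := by
      apply summable_nat_aux
      have := min_le_right β₁ β₂
      linarith
    have := h1.mul_of_nonneg h2 (fun n => Real.rpow_nonneg (hb1 n).le _)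
      (fun j => Real.rpow_nonneg (hb2 j).le _)
    apply this.congr
    intro a
    simp only [hgdef]
    rw [mul_pow, ← Real.rpow_natCast ((1 + (a.1:ℝ)^2) ^ _) 2,
      ← Real.rpow_natCast ((1 + (a.2:ℝ)^2) ^ _) 2,
      ← Real.rpow_mul (hb1 a.1).le, ← Real.rpow_mul (hb2 a.2).le]
    push_cast
    ring_nf
  -- Hilbert–Schmidt summability of the kernel
  have hK : Summable fun p : (ℤ × ℕ) × (ℤ × ℕ) => ‖K p.1 p.2‖ ^ 2 := by
    have hB : Summable fun p : (ℤ × ℕ) × (ℤ × ℕ) => (C ^ 2 * f p.1 ^ 2) * g p.2 ^ 2 :=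
      (hf2.mul_left (C ^ 2)).mul_of_nonneg hg2 (fun a => by positivity) (fun a => sq_nonneg _)
    apply Summable.of_nonneg_of_le (fun p => sq_nonneg _) _ hB
    intro p
    calc ‖K p.1 p.2‖ ^ 2 ≤ (C * f p.1 * g p.2) ^ 2 :=
          pow_le_pow_left₀ (norm_nonneg _) (hKb p.1 p.2) 2
      _ = (C ^ 2 * f p.1 ^ 2) * g p.2 ^ 2 := by ring
  obtain ⟨T, hT⟩ := exists_kernel_op K hK
  -- matrix entries of T
  have hTco : ∀ (b a : ℤ × ℕ), T (lp.single 2 b (1:ℂ)) a = K a b := by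
    intro b a
    rw [hT]
    rw [tsum_eq_single b]
    · rw [lp_single_apply, if_pos rfl, mul_one]
    · intro b' hb'
      rw [lp_single_apply, if_neg hb', mul_zero]
  have hTinner : ∀ a b : ℤ × ℕ, ⟪lp.single 2 a (1:ℂ), T (lp.single 2 b (1:ℂ))⟫_ℂ = K a b := by
    intro a b
    rw [inner_single_one, hTco]
  -- symmetry of V's entries
  have hsym : ∀ x y : lp (fun _ : ℤ × ℕ => ℂ) 2, ⟪V x, y⟫_ℂ = ⟪x, V y⟫_ℂ := by
    intro x y
    have hadj : ContinuousLinearMap.adjoint V = V :=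
      ContinuousLinearMap.isSelfAdjoint_iff'.mp hVsa
    conv_lhs => rw [← hadj]
    exact ContinuousLinearMap.adjoint_inner_left V y x
  have hvherm : ∀ a b : ℤ × ℕ, (starRingEnd ℂ) (v a b) = v b a := by
    intro a b
    simp only [hvdef]
    rw [inner_conj_symm, hsym]
  have hKherm : ∀ a b : ℤ × ℕ, (starRingEnd ℂ) (K a b) = K b a := by
    intro a b
    simp only [hKdef, map_mul, Complex.conj_ofReal, hvherm]
    ring
  have hTab : ∀ a b : ℤ × ℕ, ⟪T (lp.single 2 a (1:ℂ)), lp.single 2 b (1:ℂ)⟫_ℂ = K a b := by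
    intro a b
    calc ⟪T (lp.single 2 a (1:ℂ)), lp.single 2 b (1:ℂ)⟫_ℂ
        = (starRingEnd ℂ) ⟪lp.single 2 b (1:ℂ), T (lp.single 2 a (1:ℂ))⟫_ℂ :=
          (inner_conj_symm _ _).symm
      _ = (starRingEnd ℂ) (K b a) := by rw [hTinner]
      _ = K a b := hKherm b a
  have hVab : ∀ a b : ℤ × ℕ, ⟪V (lp.single 2 a (1:ℂ)), lp.single 2 b (1:ℂ)⟫_ℂ = v a b := by
    intro a b
    calc ⟪V (lp.single 2 a (1:ℂ)), lp.single 2 b (1:ℂ)⟫_ℂ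
        = (starRingEnd ℂ) ⟪lp.single 2 b (1:ℂ), V (lp.single 2 a (1:ℂ))⟫_ℂ :=
          (inner_conj_symm _ _).symm
      _ = (starRingEnd ℂ) (v b a) := rfl
      _ = v a b := by rw [← hvherm a b]; simp
  -- self-adjointness of T
  have hTsa : IsSelfAdjoint T := by
    rw [ContinuousLinearMap.isSelfAdjoint_iff']
    apply clm_ext_of_singles
    intro b
    apply lp.ext; funext a
    have h1 : (ContinuousLinearMap.adjoint T (lp.single 2 b (1:ℂ))) a
        = ⟪lp.single 2 a (1:ℂ), ContinuousLinearMap.adjoint T (lp.single 2 b (1:ℂ))⟫_ℂ :=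
      (inner_single_one a _).symm
    rw [h1, ContinuousLinearMap.adjoint_inner_right, hTab, hTco]
  -- positivity of T
  have hTpos : ∀ x : lp (fun _ : ℤ × ℕ => ℂ) 2, 0 ≤ (⟪T x, x⟫_ℂ).re := by
    have hkey : ∀ (s : Finset (ℤ × ℕ)) (c : ℤ × ℕ → ℂ),
        ⟪T (∑ a ∈ s, c a • lp.single 2 a (1:ℂ)), ∑ a ∈ s, c a • lp.single 2 a (1:ℂ)⟫_ℂ
        = ⟪V (∑ a ∈ s, (((w a : ℝ) : ℂ) * c a) • lp.single 2 a (1:ℂ)),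
            ∑ a ∈ s, (((w a : ℝ) : ℂ) * c a) • lp.single 2 a (1:ℂ)⟫_ℂ := by
      intro s c
      rw [map_sum, map_sum, sum_inner, sum_inner]
      apply Finset.sum_congr rfl
      intro a _
      rw [inner_sum, inner_sum]
      apply Finset.sum_congr rfl
      intro b _
      rw [map_smul, map_smul, inner_smul_left, inner_smul_left, inner_smul_right,
        inner_smul_right, hTab, hVab]
      simp only [hKdef, map_mul, Complex.conj_ofReal]
      ring
    have hclosed : IsClosed {x : lp (fun _ : ℤ × ℕ => ℂ) 2 | 0 ≤ (⟪T x, x⟫_ℂ).re} := by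
      apply isClosed_le continuous_const
      exact Complex.continuous_re.comp ((T.continuous).inner continuous_id)
    intro x
    have hmem : x ∈ closure {g : lp (fun _ : ℤ × ℕ => ℂ) 2 |
        ∃ (s : Finset (ℤ × ℕ)) (c : ℤ × ℕ → ℂ), g = ∑ a ∈ s, c a • lp.single 2 a 1} := dense_FS x
    have hsub : {g : lp (fun _ : ℤ × ℕ => ℂ) 2 |
        ∃ (s : Finset (ℤ × ℕ)) (c : ℤ × ℕ → ℂ), g = ∑ a ∈ s, c a • lp.single 2 a 1}
        ⊆ {x : lp (fun _ : ℤ × ℕ => ℂ) 2 | 0 ≤ (⟪T x, x⟫_ℂ).re} := by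
      rintro g ⟨s, c, rfl⟩
      simp only [Set.mem_setOf_eq]
      rw [hkey]
      exact hVpos _
    have := closure_mono hsub hmem
    rwa [hclosed.closure_eq] at this
  refine ⟨T, hTsa, hTpos, ?_, ?_⟩
  · intro n m j k
    rw [hTinner]
    simp only [hKdef, hwdef, hvdef]
    push_cast
    ring
  · intro D hD
    -- the diagonal operator
    obtain ⟨D₀, hD₀⟩ := exists_diag_op (fun a => (w a)⁻¹) (by
      intro a
      rw [abs_of_pos (inv_pos.mpr (hwpos a))]
      exact inv_le_one_of_one_le₀ (hw1 a))
    have hD₀single : ∀ b : ℤ × ℕ, D₀ (lp.single 2 b (1:ℂ))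
        = (((w b)⁻¹ : ℝ) : ℂ) • lp.single 2 b (1:ℂ) := by
      intro b
      apply lp.ext; funext a
      rw [hD₀, lp.coeFn_smul, Pi.smul_apply, lp_single_apply]
      split_ifs with h
      · subst h; simp
      · simp
    have hwinv : ∀ a : ℤ × ℕ, (w a)⁻¹
        = (1 + (a.1 : ℝ) ^ 2) ^ (-(min ν₁ ν₂ / 4)) * (1 + (a.2 : ℝ) ^ 2) ^ (-(min β₁ β₂ / 4)) := by
      intro a
      simp only [hwdef]
      rw [mul_inv, ← Real.rpow_neg (hb1 a.1).le, ← Real.rpow_neg (hb2 a.2).le]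
    have hDD₀ : D = D₀ := by
      apply clm_ext_of_singles
      rintro ⟨n, j⟩
      rw [hD n j, hD₀single, hwinv]
    rw [hDD₀]
    apply clm_ext_of_singles
    intro b
    apply lp.ext; funext a
    have hwa : ((w a : ℝ) : ℂ) ≠ 0 := Complex.ofReal_ne_zero.mpr (hwpos a).ne'
    have hwb : ((w b : ℝ) : ℂ) ≠ 0 := Complex.ofReal_ne_zero.mpr (hwpos b).ne'
    have hco : ((D₀ ∘L T ∘L D₀) (lp.single 2 b (1:ℂ))) a
        = (((w a)⁻¹ : ℝ) : ℂ) * ((((w b)⁻¹ : ℝ) : ℂ) * K a b) := by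
      rw [ContinuousLinearMap.comp_apply, ContinuousLinearMap.comp_apply, hD₀single,
        map_smul, map_smul, lp.coeFn_smul, Pi.smul_apply, smul_eq_mul, hD₀, hTco]
      ring
    rw [hco, ← inner_single_one a (V (lp.single 2 b (1:ℂ)))]
    have : ⟪lp.single 2 a (1:ℂ), V (lp.single 2 b (1:ℂ))⟫_ℂ = v a b := rfl
    rw [this]
    simp only [hKdef]
    push_cast
    field_simp
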